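/- The graph on vertex set SL₂(F_q) in which two distinct matrices A, B are adjacent iff det(A − B) ≠ 0 is regular of degree q³ − q² − q. -/

import Mathlib

open scoped Classical

section Helpers

variable {F : Type*} [Field F] [Fintype F]

private lemma hyperbola_card (t : F) :
    (Finset.univ.filter (fun p : F × F => p.1 * p.2 = t)).card
      = if t = 0 then 2 * Fintype.card F - 1 else Fintype.card F - 1 := by
  split_ifs with ht
  · subst ht
    have hset : Finset.univ.filter (fun p : F × F => p.1 * p.2 = 0)
        = (({0} : Finset F) ×ˢ Finset.univ) ∪ (Finset.univ ×ˢ ({0} : Finset F)) := by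
      ext ⟨b, c⟩
      simp [mul_eq_zero, eq_comm]
    have hinter : ((({0} : Finset F) ×ˢ Finset.univ) ∩ (Finset.univ ×ˢ ({0} : Finset F)))
        = ({0} : Finset F) ×ˢ ({0} : Finset F) := by
      ext ⟨b, c⟩; simp [Prod.ext_iff, eq_comm]
    have hu := Finset.card_union_add_card_inter
      ((({0} : Finset F) ×ˢ Finset.univ)) ((Finset.univ ×ˢ ({0} : Finset F)))
    rw [hinter] at hu
    simp only [Finset.card_product, Finset.card_singleton, Finset.card_univ, one_mul,
      mul_one] at hu
    rw [hset]
    omega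
  · have key : (Finset.univ.erase (0:F)).card
        = (Finset.univ.filter (fun p : F × F => p.1 * p.2 = t)).card := by
      refine Finset.card_nbij' (fun b => (b, b⁻¹ * t)) (fun p => p.1) ?_ ?_ ?_ ?_
      · intro b hb
        simp only [Finset.mem_coe, Finset.mem_erase, Finset.mem_univ, and_true] at hb
        simp only [Finset.mem_coe, Finset.mem_filter, Finset.mem_univ, true_and]
        rw [← mul_assoc, mul_inv_cancel₀ hb, one_mul]
      · intro p hp
        simp only [Finset.mem_coe, Finset.mem_filter, Finset.mem_univ, true_and] at hp
        simp only [Finset.mem_coe, Finset.mem_erase, Finset.mem_univ, and_true]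
        intro h
        rw [h, zero_mul] at hp
        exact ht hp.symm
      · intro b _; rfl
      · intro p hp
        simp only [Finset.mem_coe, Finset.mem_filter, Finset.mem_univ, true_and] at hp
        have h1 : p.1 ≠ 0 := by
          intro h
          rw [h, zero_mul] at hp
          exact ht hp.symm
        have h2 : p.1⁻¹ * t = p.2 := by
          rw [← hp, ← mul_assoc, inv_mul_cancel₀ h1, one_mul]
        exact Prod.ext rfl h2
    rw [← key, Finset.card_erase_of_mem (Finset.mem_univ _), Finset.card_univ]

private lemma card_filter_prod {α β : Type*} [Fintype α] [Fintype β] (P : α × β → Prop)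
    [DecidablePred P] :
    (Finset.univ.filter P).card
      = ∑ a : α, (Finset.univ.filter (fun b : β => P (a, b))).card := by
  rw [Finset.card_eq_sum_card_fiberwise (f := Prod.fst) (t := Finset.univ)
    (fun x _ => Finset.mem_univ _)]
  refine Finset.sum_congr rfl fun a _ => ?_
  refine Finset.card_nbij' (fun p => p.2) (fun b => (a, b)) ?_ ?_ ?_ ?_
  · rintro ⟨x, y⟩ hp
    simp only [Finset.mem_coe, Finset.mem_filter, Finset.mem_univ, true_and] at hp ⊢
    obtain ⟨h1, h2⟩ := hp
    subst h2
    exact h1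
  · intro b hb
    simp only [Finset.mem_coe, Finset.mem_filter, Finset.mem_univ, true_and, and_true] at hb ⊢
    exact hb
  · rintro ⟨x, y⟩ hp
    simp only [Finset.mem_coe, Finset.mem_filter] at hp
    simp [hp.2]
  · intro b _; rfl

end Helpers

theorem sl2_invertible_difference_graph_regular {F : Type*} [Field F] [Fintype F]
    (A : Matrix (Fin 2) (Fin 2) F) (hA : A.det = 1) :
    (Finset.univ.filter
      (fun B : Matrix (Fin 2) (Fin 2) F => B.det = 1 ∧ B ≠ A ∧ (A - B).det ≠ 0)).card
      = Fintype.card F ^ 3 - Fintype.card F ^ 2 - Fintype.card F := by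
  set q := Fintype.card F with hqdef
  have hq : 2 ≤ q := Fintype.one_lt_card
  have hAu : IsUnit A.det := by rw [hA]; exact isUnit_one
  -- Step 1: bijection B ↦ A⁻¹ * B
  have hstep1 : (Finset.univ.filter
      (fun B : Matrix (Fin 2) (Fin 2) F => B.det = 1 ∧ B ≠ A ∧ (A - B).det ≠ 0)).card
      = (Finset.univ.filter
        (fun C : Matrix (Fin 2) (Fin 2) F => C.det = 1 ∧ (1 - C).det ≠ 0)).card := by
    refine Finset.card_nbij' (fun B => A⁻¹ * B) (fun C => A * C) ?_ ?_ ?_ ?_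
    · intro B hB
      simp only [Finset.mem_coe, Finset.mem_filter, Finset.mem_univ, true_and] at hB ⊢
      obtain ⟨h1, _h2, h3⟩ := hB
      refine ⟨?_, ?_⟩
      · rw [Matrix.det_mul, Matrix.det_nonsing_inv, hA, h1, Ring.inverse_one, one_mul]
      · have hrw : (1 : Matrix (Fin 2) (Fin 2) F) - A⁻¹ * B = A⁻¹ * (A - B) := by
          rw [mul_sub, Matrix.nonsing_inv_mul _ hAu]
        rw [hrw, Matrix.det_mul, Matrix.det_nonsing_inv, hA, Ring.inverse_one, one_mul]
        exact h3
    · intro C hC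
      simp only [Finset.mem_coe, Finset.mem_filter, Finset.mem_univ, true_and] at hC ⊢
      obtain ⟨h1, h2⟩ := hC
      have hC1 : C ≠ 1 := by rintro rfl; simp at h2
      refine ⟨by rw [Matrix.det_mul, hA, one_mul, h1], ?_, ?_⟩
      · intro h
        apply hC1
        calc C = A⁻¹ * (A * C) := by
              rw [← mul_assoc, Matrix.nonsing_inv_mul _ hAu, one_mul]
          _ = 1 := by rw [h, Matrix.nonsing_inv_mul _ hAu]
      · have hrw : A - A * C = A * (1 - C) := by rw [mul_sub, mul_one]
        rw [hrw, Matrix.det_mul, hA, one_mul]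
        exact h2
    · intro B _
      show A * (A⁻¹ * B) = B
      rw [← mul_assoc, Matrix.mul_nonsing_inv _ hAu, one_mul]
    · intro C _
      show A⁻¹ * (A * C) = C
      rw [← mul_assoc, Matrix.nonsing_inv_mul _ hAu, one_mul]
  rw [hstep1]
  -- Split: S = T + N
  have hsplit := Finset.card_filter_add_card_filter_not
    (s := Finset.univ.filter (fun C : Matrix (Fin 2) (Fin 2) F => C.det = 1))
    (p := fun C : Matrix (Fin 2) (Fin 2) F => (1 - C).det = 0)
  rw [Finset.filter_filter, Finset.filter_filter] at hsplit
  -- det of 1 - C in coordinates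
  have hdet1C : ∀ C : Matrix (Fin 2) (Fin 2) F,
      (1 - C).det = (1 - C 0 0) * (1 - C 1 1) - C 0 1 * C 1 0 := by
    intro C
    rw [Matrix.det_fin_two]
    simp only [Matrix.sub_apply, Matrix.one_apply_eq,
      Matrix.one_apply_ne (by decide : (0 : Fin 2) ≠ 1),
      Matrix.one_apply_ne (by decide : (1 : Fin 2) ≠ 0)]
    ring
  -- Count S : matrices with det = 1
  have hS : (Finset.univ.filter (fun C : Matrix (Fin 2) (Fin 2) F => C.det = 1)).card
      = (Finset.univ.filter
          (fun x : (F × F) × F × F => x.1.1 * x.1.2 - x.2.1 * x.2.2 = 1)).card := by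
    refine Finset.card_nbij' (fun C => ((C 0 0, C 1 1), (C 0 1, C 1 0)))
      (fun x => !![x.1.1, x.2.1; x.2.2, x.1.2]) ?_ ?_ ?_ ?_
    · intro C hC
      simp only [Finset.mem_coe, Finset.mem_filter, Finset.mem_univ, true_and, Matrix.det_fin_two] at hC ⊢
      exact hC
    · intro x hx
      simp only [Finset.mem_coe, Finset.mem_filter, Finset.mem_univ, true_and] at hx ⊢
      rw [Matrix.det_fin_two_of]
      exact hx
    · intro C _
      exact (Matrix.eta_fin_two C).symm
    · intro x _
      simp
  have hc : ∀ ad : F × F,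
      (Finset.univ.filter
        (fun bc : F × F => ad.1 * ad.2 - bc.1 * bc.2 = 1)).card
        = if ad.1 * ad.2 = 1 then 2 * q - 1 else q - 1 := by
    intro ad
    have heq : (Finset.univ.filter
          (fun bc : F × F => ad.1 * ad.2 - bc.1 * bc.2 = 1))
        = Finset.univ.filter (fun bc : F × F => bc.1 * bc.2 = ad.1 * ad.2 - 1) := by
      ext bc
      simp only [Finset.mem_filter, Finset.mem_univ, true_and]
      constructor <;> intro h <;> linear_combination -h
    rw [heq, hyperbola_card, sub_eq_zero, eq_comm]
  have hSval : (Finset.univ.filter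
      (fun x : (F × F) × F × F => x.1.1 * x.1.2 - x.2.1 * x.2.2 = 1)).card
      = (q - 1) * (2 * q - 1) + (q * q - (q - 1)) * (q - 1) := by
    refine (card_filter_prod _).trans ?_
    refine (Finset.sum_congr rfl fun ad _ => hc ad).trans ?_
    rw [Finset.sum_ite, Finset.sum_const, Finset.sum_const, smul_eq_mul, smul_eq_mul]
    have h1 : (Finset.univ.filter (fun ad : F × F => ad.1 * ad.2 = 1)).card = q - 1 := by
      rw [hyperbola_card, if_neg (one_ne_zero)]
    have h2 := Finset.card_filter_add_card_filter_not
      (s := (Finset.univ : Finset (F × F))) (p := fun ad : F × F => ad.1 * ad.2 = 1)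
    rw [h1, Finset.card_univ, Fintype.card_prod, ← hqdef] at h2
    rw [h1]
    have hX : (Finset.univ.filter (fun ad : F × F => ¬ ad.1 * ad.2 = 1)).card
        = q * q - (q - 1) := by
      generalize hQ : q * q = Q at h2
      omega
    rw [hX]
  -- Count T : matrices with det = 1 and det (1 - C) = 0
  have hT : (Finset.univ.filter
      (fun C : Matrix (Fin 2) (Fin 2) F => C.det = 1 ∧ (1 - C).det = 0)).card
      = (Finset.univ.filter
          (fun x : (F × F) × F × F => x.1.1 * x.1.2 - x.2.1 * x.2.2 = 1 ∧
            (1 - x.1.1) * (1 - x.1.2) - x.2.1 * x.2.2 = 0)).card := by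
    refine Finset.card_nbij' (fun C => ((C 0 0, C 1 1), (C 0 1, C 1 0)))
      (fun x => !![x.1.1, x.2.1; x.2.2, x.1.2]) ?_ ?_ ?_ ?_
    · intro C hC
      simp only [Finset.mem_coe, Finset.mem_filter, Finset.mem_univ, true_and, Matrix.det_fin_two,
        hdet1C] at hC ⊢
      exact hC
    · intro x hx
      simp only [Finset.mem_coe, Finset.mem_filter, Finset.mem_univ, true_and] at hx ⊢
      rw [Matrix.det_fin_two_of, hdet1C]
      simpa using hx
    · intro C _
      exact (Matrix.eta_fin_two C).symm
    · intro x _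
      simp
  have inner : ∀ ad : F × F,
      (Finset.univ.filter (fun bc : F × F => ad.1 * ad.2 - bc.1 * bc.2 = 1 ∧
        (1 - ad.1) * (1 - ad.2) - bc.1 * bc.2 = 0)).card
      = if ad.2 = 2 - ad.1 then (if ad.1 = 1 then 2 * q - 1 else q - 1) else 0 := by
    rintro ⟨a, d⟩
    dsimp only
    by_cases h : d = 2 - a
    · subst h
      rw [if_pos rfl]
      have hst : (Finset.univ.filter (fun bc : F × F =>
            a * (2 - a) - bc.1 * bc.2 = 1 ∧
            (1 - a) * (1 - (2 - a)) - bc.1 * bc.2 = 0))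
          = Finset.univ.filter (fun bc : F × F => bc.1 * bc.2 = a * (2 - a) - 1) := by
        ext bc
        simp only [Finset.mem_filter, Finset.mem_univ, true_and]
        constructor
        · rintro ⟨h1, _⟩; linear_combination -h1
        · intro h1
          exact ⟨by linear_combination -h1, by linear_combination -h1⟩
      rw [hst, hyperbola_card]
      by_cases h1 : a = 1
      · subst h1
        rw [if_pos rfl, if_pos (by ring)]
      · rw [if_neg h1, if_neg ?_]
        intro hc2
        apply h1
        have hsq : (a - 1) ^ 2 = 0 := by linear_combination -hc2
        have := (pow_eq_zero_iff (two_ne_zero)).mp hsq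
        exact sub_eq_zero.mp this
    · rw [if_neg h, Finset.card_eq_zero, Finset.filter_eq_empty_iff]
      rintro bc _ ⟨h1, h2⟩
      apply h
      linear_combination h1 - h2
  have hcollapse : ∀ a : F,
      (∑ d : F, if d = 2 - a then (if a = 1 then 2 * q - 1 else q - 1) else 0)
      = if a = 1 then 2 * q - 1 else q - 1 := by
    intro a
    rw [Finset.sum_ite_eq' Finset.univ (2 - a)
      (fun _ => if a = 1 then 2 * q - 1 else q - 1), if_pos (Finset.mem_univ _)]
  have hTval : (Finset.univ.filter
      (fun x : (F × F) × F × F => x.1.1 * x.1.2 - x.2.1 * x.2.2 = 1 ∧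
        (1 - x.1.1) * (1 - x.1.2) - x.2.1 * x.2.2 = 0)).card
      = (2 * q - 1) + (q - 1) * (q - 1) := by
    refine (card_filter_prod _).trans ?_
    refine (Finset.sum_congr rfl fun ad _ => inner ad).trans ?_
    rw [Fintype.sum_prod_type]
    have e2 : (∑ a : F, ∑ d : F,
          if d = 2 - a then (if a = 1 then 2 * q - 1 else q - 1) else 0)
        = ∑ a : F, (if a = 1 then 2 * q - 1 else q - 1) :=
      Finset.sum_congr rfl fun a _ => hcollapse a
    refine e2.trans ?_
    rw [Finset.sum_ite, Finset.sum_const, Finset.sum_const, smul_eq_mul, smul_eq_mul]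
    have h1 : (Finset.univ.filter (fun a : F => a = 1)).card = 1 := by
      rw [Finset.card_eq_one]
      exact ⟨1, by ext a; simp⟩
    have h2 := Finset.card_filter_add_card_filter_not
      (s := (Finset.univ : Finset F)) (p := fun a : F => a = 1)
    rw [h1, Finset.card_univ, ← hqdef] at h2
    have h3 : (Finset.univ.filter (fun a : F => ¬ a = 1)).card = q - 1 := by omega
    rw [h1, h3, one_mul]
  -- Assemble
  rw [hS, hSval, hT, hTval] at hsplit
  have h1q : 1 ≤ q := by omega
  have h12q : 1 ≤ 2 * q := by omega
  have hq1qq : q - 1 ≤ q * q := le_trans (by omega) (Nat.le_mul_of_pos_left q (by omega))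
  have hq23 : q ^ 2 ≤ q ^ 3 := Nat.pow_le_pow_right (by omega) (by norm_num)
  have hq123 : q + q ^ 2 ≤ q ^ 3 := by nlinarith
  have hq33 : q ≤ q ^ 3 - q ^ 2 := by omega
  have key : (q - 1) * (2 * q - 1) + (q * q - (q - 1)) * (q - 1)
      = ((2 * q - 1) + (q - 1) * (q - 1)) + (q ^ 3 - q ^ 2 - q) := by
    zify [h1q, h12q, hq1qq, hq23, hq33]
    ring
  exact Nat.add_left_cancel (hsplit.trans key)
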